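/- Consider the Sturm–Liouville operator L_B u = −u'' + Qu on (0,1] with Q real-valued, regular at x=1 and limit-circle at x=0, domain determined by u(1)=0 and the boundary condition [u,s](0) + B[u,c](0) = 0 at the singular endpoint, where {c,s} is a real basis of solutions of ℓu = 0 with s(1)=0, s'(1)=1 and Wronskian sc' − s'c ≡ 1, and B ∈ ℂ \ {0}. Then L_B is dissipative if and only if Im B ≥ 0. -/

import Mathlib

open Complex MeasureTheory Filter
open scoped ContDiff

noncomputable section

/-- The Sturm–Liouville expression `ℓu = -u'' + Q u`. -/
def ell (Q : ℝ → ℝ) (u : ℝ → ℂ) (x : ℝ) : ℂ :=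
  -(deriv (deriv u) x) + (Q x : ℂ) * u x

/-- The Wronskian `[u,v](x) = u(x)v'(x) - u'(x)v(x)` of a complex function `u` with a
real function `v`. -/
def Wr (u : ℝ → ℂ) (v : ℝ → ℝ) (x : ℝ) : ℂ :=
  u x * Complex.ofReal (deriv v x) - deriv u x * Complex.ofReal (v x)

/-- Membership in the maximal domain: `u, ℓu ∈ L₂(0,1)`, `u` twice differentiable on
`(0,1]`, and `u(1) = 0`. -/
def InMaxDom (Q : ℝ → ℝ) (u : ℝ → ℂ) : Prop :=
  MemLp u 2 (volume.restrict (Set.Ioc (0:ℝ) 1)) ∧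
  MemLp (ell Q u) 2 (volume.restrict (Set.Ioc (0:ℝ) 1)) ∧
  (∀ x ∈ Set.Ioc (0:ℝ) 1, DifferentiableAt ℝ u x ∧ DifferentiableAt ℝ (deriv u) x) ∧
  u 1 = 0

/-- Membership in the domain of `L_B`: maximal domain together with existence of the
boundary Wronskians `[u,c](0)`, `[u,s](0)` and the boundary condition
`[u,s](0) + B [u,c](0) = 0`. -/
def InDomB (Q c s : ℝ → ℝ) (B : ℂ) (u : ℝ → ℂ) : Prop :=
  InMaxDom Q u ∧
  ∃ wc ws : ℂ,
    Tendsto (Wr u c) (nhdsWithin 0 (Set.Ioi 0)) (nhds wc) ∧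
    Tendsto (Wr u s) (nhdsWithin 0 (Set.Ioi 0)) (nhds ws) ∧
    ws + B * wc = 0

lemma integrable_conj_mul_ell (Q : ℝ → ℝ) (u : ℝ → ℂ) (hu : InMaxDom Q u) :
    Integrable (fun x => (starRingEnd ℂ) (u x) * ell Q u x)
      (volume.restrict (Set.Ioc (0:ℝ) 1)) := by
  obtain ⟨huL2, hellL2, -, -⟩ := hu
  have hconjL2 : MemLp (fun x => (starRingEnd ℂ) (u x)) 2
      (volume.restrict (Set.Ioc (0:ℝ) 1)) :=
    huL2.of_le (Complex.continuous_conj.comp_aestronglyMeasurable huL2.1)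
      (Eventually.of_forall fun x => by simp)
  have h1 : (1:ENNReal)/1 = 1/2 + 1/2 := by
    rw [ENNReal.div_add_div_same, one_add_one_eq_two,
      ENNReal.div_self two_ne_zero ENNReal.ofNat_ne_top, div_one]
  have h2 := hellL2.smul hconjL2 (r := 1)
  rw [memLp_one_iff_integrable] at h2
  exact h2

lemma key_formula (Q cc ss : ℝ → ℝ) (u : ℝ → ℂ)
    (hW : ∀ x ∈ Set.Ioc (0:ℝ) 1, ss x * deriv cc x - deriv ss x * cc x = 1)
    (hu : InMaxDom Q u) {wc ws : ℂ}
    (hwc : Tendsto (Wr u cc) (nhdsWithin 0 (Set.Ioi 0)) (nhds wc))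
    (hws : Tendsto (Wr u ss) (nhdsWithin 0 (Set.Ioi 0)) (nhds ws)) :
    (∫ x in Set.Ioc (0:ℝ) 1, (starRingEnd ℂ) (u x) * ell Q u x).im
      = -(ws * (starRingEnd ℂ) wc).im := by
  have hint := integrable_conj_mul_ell Q u hu
  obtain ⟨huL2, hellL2, hdiff, hu1⟩ := hu
  set F : ℝ → ℝ := fun x => ((starRingEnd ℂ) (u x) * deriv u x).im with hFdef
  set g : ℝ → ℝ := fun x => ((starRingEnd ℂ) (u x) * ell Q u x).im with hgdef
  have hgint : IntegrableOn g (Set.Ioc (0:ℝ) 1) volume := hint.im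
  have hFderiv : ∀ x ∈ Set.Ioc (0:ℝ) 1, HasDerivAt F (-(g x)) x := by
    intro x hx
    obtain ⟨h1, h2⟩ := hdiff x hx
    have hconj : HasDerivAt (fun t => (starRingEnd ℂ) (u t))
        ((starRingEnd ℂ) (deriv u x)) x := by
      exact h1.hasDerivAt.star
    have hmul := hconj.mul h2.hasDerivAt
    have him := Complex.imCLM.hasFDerivAt.comp_hasDerivAt x hmul
    have : Complex.imCLM ((starRingEnd ℂ) (deriv u x) * deriv u x
        + (starRingEnd ℂ) (u x) * deriv (deriv u) x) = -(g x) := by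
      simp only [hgdef, ell, Complex.imCLM_apply, mul_add, mul_neg, Complex.add_im,
        Complex.neg_im, Complex.mul_im, Complex.mul_re, Complex.conj_re, Complex.conj_im,
        Complex.ofReal_re, Complex.ofReal_im]
      ring
    rw [this] at him
    exact him
  have hFTC : ∀ ε ∈ Set.Ioo (0:ℝ) 1, (∫ x in ε..1, g x) = F ε := by
    intro ε hε
    have hab : ε ≤ 1 := hε.2.le
    have hii : IntervalIntegrable (fun x => -(g x)) volume ε 1 :=
      ((intervalIntegrable_iff_integrableOn_Ioc_of_le hab).mpr
        (hgint.mono_set (Set.Ioc_subset_Ioc_left hε.1.le))).neg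
    have hder : ∀ x ∈ Set.uIcc ε 1, HasDerivAt F (-(g x)) x := by
      intro x hx
      rw [Set.uIcc_of_le hab] at hx
      exact hFderiv x ⟨lt_of_lt_of_le hε.1 hx.1, hx.2⟩
    have := intervalIntegral.integral_eq_sub_of_hasDerivAt hder hii
    have hF1 : F 1 = 0 := by simp [hFdef, hu1]
    rw [intervalIntegral.integral_neg, hF1] at this
    linarith
  have hcont : Tendsto (fun ε => ∫ x in ε..1, g x) (nhdsWithin 0 (Set.Ioi 0))
      (nhds (∫ x in Set.Ioc (0:ℝ) 1, g x)) := by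
    have hicc : IntegrableOn g (Set.uIcc (0:ℝ) 1) volume := by
      rw [Set.uIcc_of_le zero_le_one, integrableOn_Icc_iff_integrableOn_Ioc]
      exact hgint
    have h1 := intervalIntegral.continuousOn_primitive_interval_left hicc
    have h2 := h1 0 (by rw [Set.uIcc_of_le zero_le_one]; exact Set.left_mem_Icc.mpr zero_le_one)
    rw [ContinuousWithinAt, intervalIntegral.integral_of_le zero_le_one] at h2
    refine h2.mono_left ?_
    rw [← nhdsWithin_Ioc_eq_nhdsGT (zero_lt_one (α := ℝ))]
    exact nhdsWithin_mono _ (by rw [Set.uIcc_of_le zero_le_one]; exact Set.Ioc_subset_Icc_self)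
  have hbd : Tendsto F (nhdsWithin 0 (Set.Ioi 0))
      (nhds (-(ws * (starRingEnd ℂ) wc).im)) := by
    have htend : Tendsto (fun x => -((Wr u ss x) * (starRingEnd ℂ) (Wr u cc x)).im)
        (nhdsWithin 0 (Set.Ioi 0)) (nhds (-(ws * (starRingEnd ℂ) wc).im)) :=
      ((Complex.continuous_im.tendsto _).comp
        (hws.mul ((Complex.continuous_conj.tendsto _).comp hwc))).neg
    refine htend.congr' ?_
    filter_upwards [Ioo_mem_nhdsGT_of_mem
      (Set.left_mem_Ico.mpr (zero_lt_one (α := ℝ)))] with x hx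
    have h1 := hW x ⟨hx.1, hx.2.le⟩
    simp only [hFdef, Wr, map_sub, map_mul, Complex.conj_ofReal]
    simp only [Complex.sub_im, Complex.mul_im, Complex.mul_re, Complex.sub_re,
      Complex.conj_re, Complex.conj_im, Complex.ofReal_re, Complex.ofReal_im,
      Complex.neg_im]
    linear_combination ((u x).re * (deriv u x).im - (u x).im * (deriv u x).re) * h1
  have hFtend : Tendsto F (nhdsWithin 0 (Set.Ioi 0))
      (nhds (∫ x in Set.Ioc (0:ℝ) 1, g x)) := by
    refine hcont.congr' ?_
    filter_upwards [Ioo_mem_nhdsGT_of_mem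
      (Set.left_mem_Ico.mpr (zero_lt_one (α := ℝ)))] with x hx
    exact hFTC x hx
  have := tendsto_nhds_unique hFtend hbd
  rw [← this]
  exact (integral_im hint).symm

/-- The limit-circle Sturm–Liouville operator `L_B` is dissipative iff `Im B ≥ 0`. -/
theorem limit_circle_dissipative_iff
    (Q c s : ℝ → ℝ) (B : ℂ) (hB : B ≠ 0)
    -- `c, s` real solutions of `ℓu = 0` on `(0,1]` with `s(1)=0`, `s'(1)=1`, `sc'-s'c ≡ 1`
    (hs1 : s 1 = 0) (hs'1 : deriv s 1 = 1)
    (hceq : ∀ x ∈ Set.Ioc (0:ℝ) 1, deriv (deriv c) x = Q x * c x)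
    (hseq : ∀ x ∈ Set.Ioc (0:ℝ) 1, deriv (deriv s) x = Q x * s x)
    (hsm : ∀ x ∈ Set.Ioc (0:ℝ) 1, DifferentiableAt ℝ c x ∧ DifferentiableAt ℝ (deriv c) x ∧
      DifferentiableAt ℝ s x ∧ DifferentiableAt ℝ (deriv s) x)
    (hW : ∀ x ∈ Set.Ioc (0:ℝ) 1, s x * deriv c x - deriv s x * c x = 1)
    -- limit-circle at `0`: all solutions square integrable
    (hcL2 : MemLp (fun x => (c x : ℂ)) 2 (volume.restrict (Set.Ioc (0:ℝ) 1)))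
    (hsL2 : MemLp (fun x => (s x : ℂ)) 2 (volume.restrict (Set.Ioc (0:ℝ) 1)))
    -- `Q` is regular at `x = 1`
    (hQ : IntegrableOn Q (Set.Ioc (1/2 : ℝ) 1))
    -- `0` is not an eigenvalue of `L_B`
    (h0 : ∀ u : ℝ → ℂ, InDomB Q c s B u →
      (∀ x ∈ Set.Ioc (0:ℝ) 1, ell Q u x = 0) → ∀ x ∈ Set.Ioc (0:ℝ) 1, u x = 0) :
    (∀ u : ℝ → ℂ, InDomB Q c s B u →
        0 ≤ (∫ x in Set.Ioc (0:ℝ) 1, (starRingEnd ℂ) (u x) * ell Q u x).im)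
      ↔ 0 ≤ B.im := by
  haveI : IsFiniteMeasure (volume.restrict (Set.Ioc (0:ℝ) 1)) := ⟨by
    rw [Measure.restrict_apply_univ]; exact measure_Ioc_lt_top⟩
  constructor
  · intro hdiss
    -- smooth cutoff
    set φ : ℝ → ℝ := fun x => 1 - Real.smoothTransition (4*x - 2) with hφdef
    have hlin : ContDiff ℝ ∞ (fun x : ℝ => 4*x - 2) := by
      apply ContDiff.sub _ contDiff_const
      exact contDiff_const.mul contDiff_id
    have hφC : ContDiff ℝ ∞ φ :=
      contDiff_const.sub (Real.smoothTransition.contDiff.comp hlin)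
    have hφ'C : ContDiff ℝ ∞ (deriv φ) := (contDiff_infty_iff_deriv.mp hφC).2
    have hφ''C : Continuous (deriv (deriv φ)) := ((contDiff_infty_iff_deriv.mp hφ'C).2).continuous
    have hφ1 : ∀ x : ℝ, x < 1/2 → φ x = 1 := by
      intro x hx
      have h : Real.smoothTransition (4*x - 2) = 0 :=
        Real.smoothTransition.zero_of_nonpos (by linarith)
      simp [hφdef, h]
    have hφ0 : ∀ x : ℝ, 3/4 < x → φ x = 0 := by
      intro x hx
      have h : Real.smoothTransition (4*x - 2) = 1 :=
        Real.smoothTransition.one_of_one_le (by linarith)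
      simp [hφdef, h]
    have hφ'1 : ∀ x : ℝ, x < 1/2 → deriv φ x = 0 := by
      intro x hx
      have h : φ =ᶠ[nhds x] fun _ => 1 :=
        eventually_of_mem (Iio_mem_nhds hx) (fun y hy => hφ1 y hy)
      rw [h.deriv_eq]; exact deriv_const x 1
    have hφ'0 : ∀ x : ℝ, 3/4 < x → deriv φ x = 0 := by
      intro x hx
      have h : φ =ᶠ[nhds x] fun _ => 0 :=
        eventually_of_mem (Ioi_mem_nhds hx) (fun y hy => hφ0 y hy)
      rw [h.deriv_eq]; exact deriv_const x 0
    have hφ''1 : ∀ x : ℝ, x < 1/2 → deriv (deriv φ) x = 0 := by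
      intro x hx
      have h : deriv φ =ᶠ[nhds x] fun _ => 0 :=
        eventually_of_mem (Iio_mem_nhds hx) (fun y hy => hφ'1 y hy)
      rw [h.deriv_eq]; exact deriv_const x 0
    have hφ''0 : ∀ x : ℝ, 3/4 < x → deriv (deriv φ) x = 0 := by
      intro x hx
      have h : deriv φ =ᶠ[nhds x] fun _ => 0 :=
        eventually_of_mem (Ioi_mem_nhds hx) (fun y hy => hφ'0 y hy)
      rw [h.deriv_eq]; exact deriv_const x 0
    have hφmem : ∀ x : ℝ, 0 ≤ φ x ∧ φ x ≤ 1 := fun x =>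
      ⟨sub_nonneg.mpr (Real.smoothTransition.le_one _),
       sub_le_self _ (Real.smoothTransition.nonneg _)⟩
    -- the solution w = s + B c and its derivative
    set w : ℝ → ℂ := fun x => (s x : ℂ) + B * (c x : ℂ) with hwdef
    set w1 : ℝ → ℂ := fun x => Complex.ofReal (deriv s x) + B * Complex.ofReal (deriv c x) with hw1def
    set u₀ : ℝ → ℂ := fun x => (φ x : ℂ) * w x with hu₀def
    have hwD : ∀ x ∈ Set.Ioc (0:ℝ) 1, HasDerivAt w (w1 x) x := by
      intro x hx
      obtain ⟨hc1, hc2, hsd1, hsd2⟩ := hsm x hx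
      exact (hsd1.hasDerivAt.ofReal_comp).add ((hc1.hasDerivAt.ofReal_comp).const_mul B)
    have hw1D : ∀ x ∈ Set.Ioc (0:ℝ) 1, HasDerivAt w1 ((Q x : ℂ) * w x) x := by
      intro x hx
      obtain ⟨hc1, hc2, hsd1, hsd2⟩ := hsm x hx
      have h := (hsd2.hasDerivAt.ofReal_comp).add ((hc2.hasDerivAt.ofReal_comp).const_mul B)
      refine h.congr_deriv ?_
      rw [hseq x hx, hceq x hx]; push_cast; ring
    have hφD : ∀ x : ℝ, HasDerivAt (fun t => Complex.ofReal (φ t)) (Complex.ofReal (deriv φ x)) x :=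
      fun x => ((hφC.differentiable (by norm_num)).differentiableAt.hasDerivAt).ofReal_comp
    have hφ'D : ∀ x : ℝ, HasDerivAt (fun t => Complex.ofReal (deriv φ t))
        (Complex.ofReal (deriv (deriv φ) x)) x :=
      fun x => ((hφ'C.differentiable (by norm_num)).differentiableAt.hasDerivAt).ofReal_comp
    have hu₀D : ∀ x ∈ Set.Ioc (0:ℝ) 1,
        HasDerivAt u₀ (Complex.ofReal (deriv φ x) * w x + Complex.ofReal (φ x) * w1 x) x :=
      fun x hx => (hφD x).mul (hwD x hx)
    set v : ℝ → ℂ := fun x => Complex.ofReal (deriv φ x) * w x + Complex.ofReal (φ x) * w1 x with hvdef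
    have hderiv_u₀ : ∀ x ∈ Set.Ioc (0:ℝ) 1, deriv u₀ x = v x :=
      fun x hx => (hu₀D x hx).deriv
    have hvD : ∀ x ∈ Set.Ioc (0:ℝ) 1, HasDerivAt v
        (Complex.ofReal (deriv (deriv φ) x) * w x + 2 * Complex.ofReal (deriv φ x) * w1 x
          + Complex.ofReal (φ x) * ((Q x : ℂ) * w x)) x := by
      intro x hx
      have h := ((hφ'D x).mul (hwD x hx)).add ((hφD x).mul (hw1D x hx))
      refine h.congr_deriv ?_; ring
    have hderiv_eq : ∀ x ∈ Set.Ioo (0:ℝ) 1, deriv u₀ =ᶠ[nhds x] v := by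
      intro x hx
      filter_upwards [IsOpen.mem_nhds isOpen_Ioo hx] with y hy
      exact hderiv_u₀ y ⟨hy.1, hy.2.le⟩
    have hdd : ∀ x ∈ Set.Ioo (0:ℝ) 1, deriv (deriv u₀) x
        = Complex.ofReal (deriv (deriv φ) x) * w x + 2 * Complex.ofReal (deriv φ x) * w1 x
          + Complex.ofReal (φ x) * ((Q x : ℂ) * w x) := by
      intro x hx
      rw [(hderiv_eq x hx).deriv_eq]
      exact (hvD x ⟨hx.1, hx.2.le⟩).deriv
    have hdiff2 : ∀ x ∈ Set.Ioo (0:ℝ) 1, DifferentiableAt ℝ (deriv u₀) x := by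
      intro x hx
      exact (hderiv_eq x hx).symm.differentiableAt_iff.mp
        (hvD x ⟨hx.1, hx.2.le⟩).differentiableAt
    -- near 1 everything vanishes
    have hdu₀zero : deriv u₀ =ᶠ[nhds (1:ℝ)] fun _ => (0:ℂ) := by
      filter_upwards [Ioi_mem_nhds (by norm_num : (3/4:ℝ) < 1)] with y hy
      have h : u₀ =ᶠ[nhds y] fun _ => (0:ℂ) := by
        filter_upwards [IsOpen.mem_nhds isOpen_Ioi hy] with z hz
        simp [hu₀def, hφ0 z hz]
      rw [h.deriv_eq]; exact deriv_const y 0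
    have hdd1 : deriv (deriv u₀) 1 = 0 := by
      rw [hdu₀zero.deriv_eq]; exact deriv_const 1 0
    -- the formula for ell Q u₀
    set gE : ℝ → ℂ := fun x => -(Complex.ofReal (deriv (deriv φ) x) * w x) - 2 * Complex.ofReal (deriv φ x) * w1 x
      with hgEdef
    have hell : ∀ x ∈ Set.Ioc (0:ℝ) 1, ell Q u₀ x = gE x := by
      intro x hx
      rcases eq_or_lt_of_le hx.2 with h1 | h1
      · subst h1
        rw [ell, hdd1]
        simp [ell, hdd1, hu₀def, hgEdef, hφ0 1 (by norm_num), hφ'0 1 (by norm_num),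
          hφ''0 1 (by norm_num)]
      · rw [ell, hdd x ⟨hx.1, h1⟩]
        simp only [hgEdef, hu₀def]
        ring
    -- continuity
    have hwcont : ContinuousOn w (Set.Ioc (0:ℝ) 1) :=
      fun x hx => ((hwD x hx).continuousAt).continuousWithinAt
    have hw1cont : ContinuousOn w1 (Set.Ioc (0:ℝ) 1) :=
      fun x hx => ((hw1D x hx).continuousAt).continuousWithinAt
    have hu₀cont : ContinuousOn u₀ (Set.Ioc (0:ℝ) 1) :=
      ((Complex.continuous_ofReal.comp hφC.continuous).continuousOn).mul hwcont
    have hgEcont : ContinuousOn gE (Set.Ioc (0:ℝ) 1) := by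
      refine ContinuousOn.sub ?_ ?_
      · exact (((Complex.continuous_ofReal.comp hφ''C).continuousOn).mul hwcont).neg
      · exact ((continuous_const.mul
          (Complex.continuous_ofReal.comp (hφ'C.continuous))).continuousOn).mul hw1cont
    -- L2 bounds
    have hwL2 : MemLp w 2 (volume.restrict (Set.Ioc (0:ℝ) 1)) :=
      hsL2.add (hcL2.const_mul B)
    have hu₀L2 : MemLp u₀ 2 (volume.restrict (Set.Ioc (0:ℝ) 1)) := by
      refine hwL2.of_le (hu₀cont.aestronglyMeasurable measurableSet_Ioc) ?_
      refine (ae_restrict_iff' measurableSet_Ioc).mpr (Eventually.of_forall fun x hx => ?_)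
      simp only [hu₀def, norm_mul, Complex.norm_real]
      have h := hφmem x
      calc |φ x| * ‖w x‖ ≤ 1 * ‖w x‖ := by
            apply mul_le_mul_of_nonneg_right _ (norm_nonneg _)
            rw [_root_.abs_of_nonneg h.1]; exact h.2
        _ = ‖w x‖ := one_mul _
    have hgEbound : ∃ M : ℝ, ∀ x ∈ Set.Ioc (0:ℝ) 1, ‖gE x‖ ≤ M := by
      have hK : IsCompact (Set.Icc (1/2:ℝ) (3/4)) := isCompact_Icc
      have hsub : Set.Icc (1/2:ℝ) (3/4) ⊆ Set.Ioc (0:ℝ) 1 := fun y hy =>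
        ⟨by linarith [hy.1], by linarith [hy.2]⟩
      obtain ⟨M, hM⟩ := hK.exists_bound_of_continuousOn (hgEcont.mono hsub)
      refine ⟨max M 0, fun x hx => ?_⟩
      by_cases hxK : x ∈ Set.Icc (1/2:ℝ) (3/4)
      · exact (hM x hxK).trans (le_max_left _ _)
      · have : gE x = 0 := by
          rcases not_and_or.mp hxK with h | h
          · push_neg at h
            simp [hgEdef, hφ'1 x h, hφ''1 x h]
          · push_neg at h
            simp [hgEdef, hφ'0 x h, hφ''0 x h]
        rw [this, norm_zero]; exact le_max_right _ _
    have hellL2 : MemLp (ell Q u₀) 2 (volume.restrict (Set.Ioc (0:ℝ) 1)) := by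
      obtain ⟨M, hM⟩ := hgEbound
      have hgEL2 : MemLp gE 2 (volume.restrict (Set.Ioc (0:ℝ) 1)) :=
        MemLp.of_bound (hgEcont.aestronglyMeasurable measurableSet_Ioc) M
          ((ae_restrict_iff' measurableSet_Ioc).mpr (Eventually.of_forall hM))
      refine hgEL2.ae_eq ?_
      exact (ae_restrict_iff' measurableSet_Ioc).mpr
        (Eventually.of_forall fun x hx => (hell x hx).symm)
    -- maximal domain
    have hmax : InMaxDom Q u₀ := by
      refine ⟨hu₀L2, hellL2, fun x hx => ⟨(hu₀D x hx).differentiableAt, ?_⟩, ?_⟩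
      · rcases eq_or_lt_of_le hx.2 with h1 | h1
        · subst h1
          exact hdu₀zero.symm.differentiableAt_iff.mp (differentiableAt_const 0)
        · exact hdiff2 x ⟨hx.1, h1⟩
      · simp [hu₀def, hφ0 1 (by norm_num)]
    -- Wronskians near 0
    have hu₀w : ∀ x ∈ Set.Ioo (0:ℝ) (1/2), u₀ x = w x ∧ deriv u₀ x = w1 x := by
      intro x hx
      have hx' : x ∈ Set.Ioc (0:ℝ) 1 := ⟨hx.1, by linarith [hx.2]⟩
      constructor
      · simp [hu₀def, hφ1 x hx.2]
      · rw [hderiv_u₀ x hx', hvdef]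
        simp [hφ1 x hx.2, hφ'1 x hx.2]
    have hWc : ∀ x ∈ Set.Ioo (0:ℝ) (1/2), Wr u₀ c x = 1 := by
      intro x hx
      have hx' : x ∈ Set.Ioc (0:ℝ) 1 := ⟨hx.1, by linarith [hx.2]⟩
      obtain ⟨h1, h2⟩ := hu₀w x hx
      have h3 := hW x hx'
      have h3c : Complex.ofReal (s x) * Complex.ofReal (deriv c x)
          - Complex.ofReal (deriv s x) * Complex.ofReal (c x) = 1 := by
        exact_mod_cast congrArg (Complex.ofReal) h3
      rw [Wr, h1, h2, hwdef, hw1def]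
      linear_combination h3c
    have hWs : ∀ x ∈ Set.Ioo (0:ℝ) (1/2), Wr u₀ s x = -B := by
      intro x hx
      have hx' : x ∈ Set.Ioc (0:ℝ) 1 := ⟨hx.1, by linarith [hx.2]⟩
      obtain ⟨h1, h2⟩ := hu₀w x hx
      have h3 := hW x hx'
      have h3c : Complex.ofReal (s x) * Complex.ofReal (deriv c x)
          - Complex.ofReal (deriv s x) * Complex.ofReal (c x) = 1 := by
        exact_mod_cast congrArg (Complex.ofReal) h3
      rw [Wr, h1, h2, hwdef, hw1def]
      linear_combination (-B) * h3c
    have hmemIoo : Set.Ioo (0:ℝ) (1/2) ∈ nhdsWithin 0 (Set.Ioi 0) :=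
      Ioo_mem_nhdsGT_of_mem (Set.left_mem_Ico.mpr (by norm_num))
    have htc : Tendsto (Wr u₀ c) (nhdsWithin 0 (Set.Ioi 0)) (nhds 1) := by
      refine tendsto_const_nhds.congr' ?_
      filter_upwards [hmemIoo] with x hx
      exact (hWc x hx).symm
    have hts : Tendsto (Wr u₀ s) (nhdsWithin 0 (Set.Ioi 0)) (nhds (-B)) := by
      refine tendsto_const_nhds.congr' ?_
      filter_upwards [hmemIoo] with x hx
      exact (hWs x hx).symm
    have hdom : InDomB Q c s B u₀ := ⟨hmax, 1, -B, htc, hts, by ring⟩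
    have h1 := hdiss u₀ hdom
    rwa [key_formula Q c s u₀ hW hmax htc hts, map_one, mul_one, Complex.neg_im, neg_neg] at h1
  · rintro hImB u ⟨hmax, wc, ws, hwc, hws, hbc⟩
    rw [key_formula Q c s u hW hmax hwc hws]
    have hws' : ws = -(B * wc) := eq_neg_of_add_eq_zero_left hbc
    rw [hws', neg_mul, Complex.neg_im, neg_neg, mul_assoc, Complex.mul_conj]
    simp only [Complex.mul_im, Complex.ofReal_re, Complex.ofReal_im, mul_zero, add_zero, zero_add]
    exact mul_nonneg hImB (Complex.normSq_nonneg wc)
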